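/- Let h : ℝⁿ → ℝ, f : ℝⁿ → ℝⁿ, and α : [0,∞) → [0,∞) be strictly increasing with α(0) = 0 and α(r) < r for all r > 0. If h(f(x)) - h(x) + α(h(x)) ≥ 0 for all x with h(x) ≥ 0, then {x | h(x) ≥ 0} is forward invariant under f. -/
import Mathlib

theorem barrier_forward_invariant_classK (n : ℕ) (h : (Fin n → ℝ) → ℝ)
    (f : (Fin n → ℝ) → (Fin n → ℝ)) (α : ℝ → ℝ)
    (hmono : StrictMonoOn α (Set.Ici 0)) (hα0 : α 0 = 0)
    (hαnonneg : ∀ r ≥ (0:ℝ), α r ≥ 0)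
    (hαlt : ∀ r > (0:ℝ), α r < r)
    (hbar : ∀ x, h x ≥ 0 → h (f x) - h x + α (h x) ≥ 0) :
    ∀ x ∈ {x | h x ≥ 0}, f x ∈ {x | h x ≥ 0} := by
  intro x hx
  have hx' : h x ≥ 0 := hx
  have hb := hbar x hx'
  rcases eq_or_lt_of_le hx' with he | hlt
  · simp only [Set.mem_setOf_eq]
    rw [← he, hα0] at hb
    linarith
  · have := hαlt (h x) hlt
    simp only [Set.mem_setOf_eq]
    linarith
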